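/- For all 2D grid functions ω, ν in W_h, the compact operator ℋ and the compact discrete Laplacian Φ are mutually adjoint in the sense that ⟨ℋω, Φν⟩ = ⟨Φω, ℋν⟩. -/
import Mathlib


open Finset

noncomputable section

/-- spatial mesh size `1/(2J)` -/
def msh (J : ℕ) : ℝ := 1 / (2 * (J : ℝ))

/-- 2D discrete inner product -/
def gridIP2 (J₁ J₂ : ℕ) (ω ν : ℕ → ℕ → ℝ) : ℝ :=
  msh J₁ * msh J₂ *
    ∑ i ∈ Finset.Icc 1 (2 * J₁ - 1), ∑ j ∈ Finset.Icc 1 (2 * J₂ - 1), ω i j * ν i j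

/-- 2D discrete `L²` norm -/
def gridNorm2 (J₁ J₂ : ℕ) (ω : ℕ → ℕ → ℝ) : ℝ :=
  Real.sqrt (gridIP2 J₁ J₂ ω ω)

/-- the 2D norm `‖ω‖_E` -/
def gridNormE (J₁ J₂ : ℕ) (ω : ℕ → ℕ → ℝ) : ℝ :=
  2 / 3 * Real.sqrt (msh J₁ * msh J₂ *
    ∑ i ∈ Finset.Icc 1 J₁, ∑ j ∈ Finset.Icc 1 J₂,
      (ω (2 * i - 2) (2 * j - 1) ^ 2 + ω (2 * i - 1) (2 * j - 2) ^ 2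
        + 3 * ω (2 * i - 1) (2 * j - 1) ^ 2))

/-- the 2D norm `‖ω‖_F = √((4/9)‖ω‖² + ‖ω‖_E²)` -/
def gridNormF (J₁ J₂ : ℕ) (ω : ℕ → ℕ → ℝ) : ℝ :=
  Real.sqrt (4 / 9 * gridNorm2 J₁ J₂ ω ^ 2 + gridNormE J₁ J₂ ω ^ 2)

/-- compact operator `𝒜` in the `x`-direction (interior formula) -/
def cA2 (ω : ℕ → ℕ → ℝ) (i j : ℕ) : ℝ := (ω (i + 1) j + 10 * ω i j + ω (i - 1) j) / 12

/-- compact operator `ℬ` in the `y`-direction (interior formula) -/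
def cB2 (ω : ℕ → ℕ → ℝ) (i j : ℕ) : ℝ := (ω i (j + 1) + 10 * ω i j + ω i (j - 1)) / 12

/-- compact operator `ℋ = 𝒜ℬ` -/
def cH (ω : ℕ → ℕ → ℝ) : ℕ → ℕ → ℝ := cA2 (cB2 ω)

/-- second difference `δ_xδ_x̄` -/
def dxx2 (J₁ : ℕ) (ω : ℕ → ℕ → ℝ) (i j : ℕ) : ℝ :=
  (ω (i + 1) j - 2 * ω i j + ω (i - 1) j) / msh J₁ ^ 2

/-- second difference `δ_yδ_ȳ` -/
def dyy2 (J₂ : ℕ) (ω : ℕ → ℕ → ℝ) (i j : ℕ) : ℝ :=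
  (ω i (j + 1) - 2 * ω i j + ω i (j - 1)) / msh J₂ ^ 2

/-- compact discrete Laplacian `Φ = ℬδ_xδ_x̄ + 𝒜δ_yδ_ȳ` -/
def cPhi (J₁ J₂ : ℕ) (ω : ℕ → ℕ → ℝ) (i j : ℕ) : ℝ :=
  cB2 (dxx2 J₁ ω) i j + cA2 (dyy2 J₂ ω) i j

/-- membership in `W_h`: vanishing on the boundary indices -/
def memWh (J₁ J₂ : ℕ) (ω : ℕ → ℕ → ℝ) : Prop :=
  ∀ i j : ℕ, (i = 0 ∨ i = 2 * J₁ ∨ j = 0 ∨ j = 2 * J₂) → ω i j = 0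

lemma shift_aux (f g : ℕ → ℝ) (M : ℕ) :
    ∑ i ∈ Finset.Icc 1 M, f (i+1) * g i
      = ∑ i ∈ Finset.Icc 1 M, f i * g (i-1) + f (M+1) * g M - f 1 * g 0 := by
  induction M with
  | zero => simp
  | succ n ih =>
      rw [Finset.sum_Icc_succ_top (by omega), Finset.sum_Icc_succ_top (by omega), ih]
      simp only [Nat.add_sub_cancel]
      ring

lemma shift1D (f g : ℕ → ℝ) (M : ℕ) (hf : f (M+1) = 0) (hg : g 0 = 0) :
    ∑ i ∈ Finset.Icc 1 M, f (i+1) * g i = ∑ i ∈ Finset.Icc 1 M, f i * g (i-1) := by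
  rw [shift_aux, hf, hg]; ring

lemma adj1D (N : ℕ) (hN : 1 ≤ N) (c : ℝ) (f g : ℕ → ℝ)
    (hf0 : f 0 = 0) (hfN : f N = 0) (hg0 : g 0 = 0) (hgN : g N = 0) :
    ∑ i ∈ Finset.Icc 1 (N-1), (f (i+1) - 2*f i + f (i-1))/c * g i
      = ∑ i ∈ Finset.Icc 1 (N-1), f i * ((g (i+1) - 2*g i + g (i-1))/c) := by
  have hM : N - 1 + 1 = N := by omega
  have e1 : ∑ i ∈ Finset.Icc 1 (N-1), f (i+1) * g i
      = ∑ i ∈ Finset.Icc 1 (N-1), f i * g (i-1) :=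
    shift1D f g (N-1) (by rw [hM]; exact hfN) hg0
  have e2 : ∑ i ∈ Finset.Icc 1 (N-1), g (i+1) * f i
      = ∑ i ∈ Finset.Icc 1 (N-1), g i * f (i-1) :=
    shift1D g f (N-1) (by rw [hM]; exact hgN) hf0
  have e1' : ∑ i ∈ Finset.Icc 1 (N-1), f (i+1) * g i / c
      = ∑ i ∈ Finset.Icc 1 (N-1), f i * g (i-1) / c := by
    rw [← Finset.sum_div, ← Finset.sum_div, e1]
  have e2' : ∑ i ∈ Finset.Icc 1 (N-1), g (i+1) * f i / c
      = ∑ i ∈ Finset.Icc 1 (N-1), g i * f (i-1) / c := by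
    rw [← Finset.sum_div, ← Finset.sum_div, e2]
  have l : ∑ i ∈ Finset.Icc 1 (N-1), (f (i+1) - 2*f i + f (i-1))/c * g i
      = ∑ i ∈ Finset.Icc 1 (N-1), f (i+1) * g i / c
        + ∑ i ∈ Finset.Icc 1 (N-1), g i * f (i-1) / c
        - ∑ i ∈ Finset.Icc 1 (N-1), 2*(f i * g i)/c := by
    rw [← Finset.sum_add_distrib, ← Finset.sum_sub_distrib]
    exact Finset.sum_congr rfl fun i _ => by ring
  have r : ∑ i ∈ Finset.Icc 1 (N-1), f i * ((g (i+1) - 2*g i + g (i-1))/c)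
      = ∑ i ∈ Finset.Icc 1 (N-1), g (i+1) * f i / c
        + ∑ i ∈ Finset.Icc 1 (N-1), f i * g (i-1) / c
        - ∑ i ∈ Finset.Icc 1 (N-1), 2*(f i * g i)/c := by
    rw [← Finset.sum_add_distrib, ← Finset.sum_sub_distrib]
    exact Finset.sum_congr rfl fun i _ => by ring
  rw [l, r, e1', e2']
  have : ∑ i ∈ Finset.Icc 1 (N-1), f i * g (i-1) / c
      = ∑ i ∈ Finset.Icc 1 (N-1), g i * f (i-1) / c
        + (∑ i ∈ Finset.Icc 1 (N-1), f i * g (i-1) / c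
           - ∑ i ∈ Finset.Icc 1 (N-1), g i * f (i-1) / c) := by ring
  ring

lemma adj_x (J₁ J₂ : ℕ) (hJ₁ : 0 < J₁) (f g : ℕ → ℕ → ℝ)
    (hf0 : ∀ j, f 0 j = 0) (hfN : ∀ j, f (2*J₁) j = 0)
    (hg0 : ∀ j, g 0 j = 0) (hgN : ∀ j, g (2*J₁) j = 0) :
    gridIP2 J₁ J₂ (dxx2 J₁ f) g = gridIP2 J₁ J₂ f (dxx2 J₁ g) := by
  unfold gridIP2
  congr 1
  rw [Finset.sum_comm,
    show (∑ i ∈ Finset.Icc 1 (2*J₁-1), ∑ j ∈ Finset.Icc 1 (2*J₂-1), f i j * dxx2 J₁ g i j)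
      = ∑ j ∈ Finset.Icc 1 (2*J₂-1), ∑ i ∈ Finset.Icc 1 (2*J₁-1), f i j * dxx2 J₁ g i j
      from Finset.sum_comm]
  refine Finset.sum_congr rfl fun j _ => ?_
  exact adj1D (2*J₁) (by omega) (msh J₁ ^ 2) (fun i => f i j) (fun i => g i j)
    (hf0 j) (hfN j) (hg0 j) (hgN j)

lemma adj_y (J₁ J₂ : ℕ) (hJ₂ : 0 < J₂) (f g : ℕ → ℕ → ℝ)
    (hf0 : ∀ i, f i 0 = 0) (hfN : ∀ i, f i (2*J₂) = 0)
    (hg0 : ∀ i, g i 0 = 0) (hgN : ∀ i, g i (2*J₂) = 0) :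
    gridIP2 J₁ J₂ (dyy2 J₂ f) g = gridIP2 J₁ J₂ f (dyy2 J₂ g) := by
  unfold gridIP2
  congr 1
  refine Finset.sum_congr rfl fun i _ => ?_
  exact adj1D (2*J₂) (by omega) (msh J₂ ^ 2) (fun j => f i j) (fun j => g i j)
    (hf0 i) (hfN i) (hg0 i) (hgN i)

lemma ip_add_left (J₁ J₂ : ℕ) (f g h : ℕ → ℕ → ℝ) :
    gridIP2 J₁ J₂ (fun i j => f i j + g i j) h
      = gridIP2 J₁ J₂ f h + gridIP2 J₁ J₂ g h := by
  simp [gridIP2, add_mul, Finset.sum_add_distrib, mul_add]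

lemma ip_add_right (J₁ J₂ : ℕ) (f g h : ℕ → ℕ → ℝ) :
    gridIP2 J₁ J₂ f (fun i j => g i j + h i j)
      = gridIP2 J₁ J₂ f g + gridIP2 J₁ J₂ f h := by
  simp [gridIP2, mul_add, Finset.sum_add_distrib]

lemma ip_smul_left (J₁ J₂ : ℕ) (c : ℝ) (f h : ℕ → ℕ → ℝ) :
    gridIP2 J₁ J₂ (fun i j => c * f i j) h = c * gridIP2 J₁ J₂ f h := by
  unfold gridIP2
  have : ∀ i, ∑ j ∈ Finset.Icc 1 (2*J₂-1), c * f i j * h i j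
      = c * ∑ j ∈ Finset.Icc 1 (2*J₂-1), f i j * h i j := by
    intro i; rw [Finset.mul_sum]; exact Finset.sum_congr rfl fun j _ => by ring
  simp_rw [this]
  rw [← Finset.mul_sum]
  ring

lemma ip_smul_right (J₁ J₂ : ℕ) (c : ℝ) (f h : ℕ → ℕ → ℝ) :
    gridIP2 J₁ J₂ f (fun i j => c * h i j) = c * gridIP2 J₁ J₂ f h := by
  unfold gridIP2
  have : ∀ i, ∑ j ∈ Finset.Icc 1 (2*J₂-1), f i j * (c * h i j)
      = c * ∑ j ∈ Finset.Icc 1 (2*J₂-1), f i j * h i j := by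
    intro i; rw [Finset.mul_sum]; exact Finset.sum_congr rfl fun j _ => by ring
  simp_rw [this]
  rw [← Finset.mul_sum]
  ring

lemma dcomm (J₁ J₂ : ℕ) (f : ℕ → ℕ → ℝ) :
    dxx2 J₁ (dyy2 J₂ f) = dyy2 J₂ (dxx2 J₁ f) := by
  funext i j; simp only [dxx2, dyy2]; ring

/-- `⟨ℋω, Φν⟩ = ⟨Φω, ℋν⟩` for all `ω, ν ∈ W_h`. -/
theorem stmt_16 (J₁ J₂ : ℕ) (hJ₁ : 0 < J₁) (hJ₂ : 0 < J₂)
    (ω ν : ℕ → ℕ → ℝ) (hω : memWh J₁ J₂ ω) (hν : memWh J₁ J₂ ν) :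
    gridIP2 J₁ J₂ (cH ω) (cPhi J₁ J₂ ν) = gridIP2 J₁ J₂ (cPhi J₁ J₂ ω) (cH ν) := by
  have h1 : msh J₁ ≠ 0 := by
    unfold msh
    exact one_div_ne_zero (mul_ne_zero two_ne_zero (Nat.cast_ne_zero.2 hJ₁.ne'))
  have h2 : msh J₂ ≠ 0 := by
    unfold msh
    exact one_div_ne_zero (mul_ne_zero two_ne_zero (Nat.cast_ne_zero.2 hJ₂.ne'))
  set a : ℝ := msh J₁ ^ 2 / 12 with ha
  set b : ℝ := msh J₂ ^ 2 / 12 with hb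
  -- boundary facts
  have hωx0 : ∀ j, ω 0 j = 0 := fun j => hω 0 j (Or.inl rfl)
  have hωxN : ∀ j, ω (2*J₁) j = 0 := fun j => hω _ j (Or.inr (Or.inl rfl))
  have hωy0 : ∀ i, ω i 0 = 0 := fun i => hω i 0 (Or.inr (Or.inr (Or.inl rfl)))
  have hωyN : ∀ i, ω i (2*J₂) = 0 := fun i => hω i _ (Or.inr (Or.inr (Or.inr rfl)))
  have hνx0 : ∀ j, ν 0 j = 0 := fun j => hν 0 j (Or.inl rfl)
  have hνxN : ∀ j, ν (2*J₁) j = 0 := fun j => hν _ j (Or.inr (Or.inl rfl))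
  have hνy0 : ∀ i, ν i 0 = 0 := fun i => hν i 0 (Or.inr (Or.inr (Or.inl rfl)))
  have hνyN : ∀ i, ν i (2*J₂) = 0 := fun i => hν i _ (Or.inr (Or.inr (Or.inr rfl)))
  have hL1ωy0 : ∀ i, dxx2 J₁ ω i 0 = 0 := fun i => by simp [dxx2, hωy0]
  have hL1ωyN : ∀ i, dxx2 J₁ ω i (2*J₂) = 0 := fun i => by simp [dxx2, hωyN]
  have hL1νy0 : ∀ i, dxx2 J₁ ν i 0 = 0 := fun i => by simp [dxx2, hνy0]
  have hL1νyN : ∀ i, dxx2 J₁ ν i (2*J₂) = 0 := fun i => by simp [dxx2, hνyN]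
  have hL2ωx0 : ∀ j, dyy2 J₂ ω 0 j = 0 := fun j => by simp [dyy2, hωx0]
  have hL2ωxN : ∀ j, dyy2 J₂ ω (2*J₁) j = 0 := fun j => by simp [dyy2, hωxN]
  have hL2νx0 : ∀ j, dyy2 J₂ ν 0 j = 0 := fun j => by simp [dyy2, hνx0]
  have hL2νxN : ∀ j, dyy2 J₂ ν (2*J₁) j = 0 := fun j => by simp [dyy2, hνxN]
  -- adjointness building blocks
  have S1 : gridIP2 J₁ J₂ (dxx2 J₁ ω) ν = gridIP2 J₁ J₂ ω (dxx2 J₁ ν) :=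
    adj_x J₁ J₂ hJ₁ ω ν hωx0 hωxN hνx0 hνxN
  have S2 : gridIP2 J₁ J₂ (dyy2 J₂ ω) ν = gridIP2 J₁ J₂ ω (dyy2 J₂ ν) :=
    adj_y J₁ J₂ hJ₂ ω ν hωy0 hωyN hνy0 hνyN
  have S3 : gridIP2 J₁ J₂ (dxx2 J₁ ω) (dyy2 J₂ ν) = gridIP2 J₁ J₂ (dyy2 J₂ ω) (dxx2 J₁ ν) := by
    have e1 : gridIP2 J₁ J₂ (dyy2 J₂ (dxx2 J₁ ω)) ν = gridIP2 J₁ J₂ (dxx2 J₁ ω) (dyy2 J₂ ν) :=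
      adj_y J₁ J₂ hJ₂ _ ν hL1ωy0 hL1ωyN hνy0 hνyN
    have e2 : gridIP2 J₁ J₂ (dxx2 J₁ (dyy2 J₂ ω)) ν = gridIP2 J₁ J₂ (dyy2 J₂ ω) (dxx2 J₁ ν) :=
      adj_x J₁ J₂ hJ₁ _ ν hL2ωx0 hL2ωxN hνx0 hνxN
    rw [← e1, ← dcomm, e2]
  have S4 : gridIP2 J₁ J₂ (dxx2 J₁ (dyy2 J₂ ω)) ν = gridIP2 J₁ J₂ ω (dxx2 J₁ (dyy2 J₂ ν)) := by
    have e1 : gridIP2 J₁ J₂ (dxx2 J₁ (dyy2 J₂ ω)) ν = gridIP2 J₁ J₂ (dyy2 J₂ ω) (dxx2 J₁ ν) :=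
      adj_x J₁ J₂ hJ₁ _ ν hL2ωx0 hL2ωxN hνx0 hνxN
    have e2 : gridIP2 J₁ J₂ (dyy2 J₂ ω) (dxx2 J₁ ν) = gridIP2 J₁ J₂ ω (dyy2 J₂ (dxx2 J₁ ν)) :=
      adj_y J₁ J₂ hJ₂ ω _ hωy0 hωyN hL1νy0 hL1νyN
    rw [e1, e2, ← dcomm]
  have S5 : gridIP2 J₁ J₂ (dxx2 J₁ (dyy2 J₂ ω)) (dxx2 J₁ ν)
      = gridIP2 J₁ J₂ (dxx2 J₁ ω) (dxx2 J₁ (dyy2 J₂ ν)) := by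
    rw [dcomm, dcomm J₁ J₂ ν]
    exact adj_y J₁ J₂ hJ₂ _ _ hL1ωy0 hL1ωyN hL1νy0 hL1νyN
  have S6 : gridIP2 J₁ J₂ (dxx2 J₁ (dyy2 J₂ ω)) (dyy2 J₂ ν)
      = gridIP2 J₁ J₂ (dyy2 J₂ ω) (dxx2 J₁ (dyy2 J₂ ν)) :=
    adj_x J₁ J₂ hJ₁ _ _ hL2ωx0 hL2ωxN hL2νx0 hL2νxN
  -- decompositions of the compact operators
  have hH : ∀ f : ℕ → ℕ → ℝ, cH f = fun i j => f i j + a * dxx2 J₁ f i j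
      + b * dyy2 J₂ f i j + a * b * dxx2 J₁ (dyy2 J₂ f) i j := by
    intro f; funext i j
    simp only [cH, cA2, cB2, dxx2, dyy2, ha, hb]
    field_simp
    ring
  have hP : ∀ f : ℕ → ℕ → ℝ, cPhi J₁ J₂ f = fun i j => dxx2 J₁ f i j
      + dyy2 J₂ f i j + (a + b) * dxx2 J₁ (dyy2 J₂ f) i j := by
    intro f; funext i j
    simp only [cPhi, cA2, cB2, dxx2, dyy2, ha, hb]
    field_simp
    ring
  rw [hH ω, hH ν, hP ω, hP ν]
  simp only [ip_add_left, ip_add_right, ip_smul_left, ip_smul_right]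
  linear_combination -S1 - S2 - (a+b)*S4 + (a-b)*S3 - a^2*S5 - b^2*S6
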